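/- Let 1 ≤ n ≤ N−1. The Gelfand–Zetlin operators satisfy the gl(N) commutation relation [E_{n,n+1}, E_{n+1,n}] = E_{nn} − E_{n+1,n+1}: for every function f : ℂ^Γ → ℂ and every point γ with γ_{mj} − γ_{ms} ∉ iℏ·ℤ for all m and all j ≠ s, one has (E_{n,n+1}(E_{n+1,n} f))(γ) − (E_{n+1,n}(E_{n,n+1} f))(γ) = (E_{nn} f)(γ) − (E_{n+1,n+1} f)(γ). -/

import Mathlib

noncomputable section

open Finset

/-- A point of the Gelfand–Zetlin variable space: an assignment of a complex
number to each index pair `(n, j)` (with `γ (N, j)` playing the role of the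
fixed top-level parameters). -/
abbrev Pt : Type := ℕ × ℕ → ℂ

/-- Operators acting on functions of the Gelfand–Zetlin variables. -/
abbrev Op : Type := (Pt → ℂ) → (Pt → ℂ)

/-- Shift the coordinate `γ (n, j)` by `c`. -/
def shift (n j : ℕ) (c : ℂ) (γ : Pt) : Pt :=
  fun p => if p = (n, j) then γ p + c else γ p

/-- The diagonal Gelfand–Zetlin operator `E_{nn}`. -/
def Ediag (hb : ℂ) (n : ℕ) : Op := fun f γ =>
  (1 / (Complex.I * hb)) *
    ((∑ j ∈ Finset.Icc 1 n, γ (n, j)) - ∑ j ∈ Finset.Icc 1 (n - 1), γ (n - 1, j)) * f γ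

/-- The raising Gelfand–Zetlin operator `E_{n,n+1}`. -/
def Eraise (hb : ℂ) (n : ℕ) : Op := fun f γ =>
  -(1 / (Complex.I * hb)) * ∑ j ∈ Finset.Icc 1 n,
    ((∏ r ∈ Finset.Icc 1 (n + 1), (γ (n, j) - γ (n + 1, r) - Complex.I * hb / 2)) /
        ∏ s ∈ (Finset.Icc 1 n).erase j, (γ (n, j) - γ (n, s))) *
      f (shift n j (-(Complex.I * hb)) γ)

/-- The lowering Gelfand–Zetlin operator `E_{n+1,n}`. -/
def Elower (hb : ℂ) (n : ℕ) : Op := fun f γ =>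
  (1 / (Complex.I * hb)) * ∑ j ∈ Finset.Icc 1 n,
    ((∏ r ∈ Finset.Icc 1 (n - 1), (γ (n, j) - γ (n - 1, r) + Complex.I * hb / 2)) /
        ∏ s ∈ (Finset.Icc 1 n).erase j, (γ (n, j) - γ (n, s))) *
      f (shift n j (Complex.I * hb) γ)

/-- Genericity: `γ (m, j) - γ (m, s) ∉ ihb·ℤ` for all levels `m ≤ N` and all `j ≠ s`. -/
def Generic (N : ℕ) (hb : ℂ) (γ : Pt) : Prop :=
  ∀ m j s, 1 ≤ m → m ≤ N → 1 ≤ j → j ≤ m → 1 ≤ s → s ≤ m → j ≠ s →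
    ∀ k : ℤ, γ (m, j) - γ (m, s) ≠ Complex.I * hb * (k : ℂ)


open Polynomial in
lemma leadingCoeff_basisDivisor {F : Type*} [Field F] (x y : F) :
    (Lagrange.basisDivisor x y).leadingCoeff = (x - y)⁻¹ := by
  rw [Lagrange.basisDivisor, leadingCoeff_mul, leadingCoeff_C,
    (monic_X_sub_C y).leadingCoeff, mul_one]

open Polynomial in
lemma key_residue {F : Type*} [Field F] {ι κ : Type*} [DecidableEq ι]
    (s : Finset ι) (t : Finset κ) (hs : s.Nonempty) (hcard : #t = #s)
    (v : ι → F) (a : κ → F) (hv : Set.InjOn v s) :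
    ∑ i ∈ s, (∏ r ∈ t, (v i - a r)) * (∏ j ∈ s.erase i, (v i - v j))⁻¹
      = (∑ i ∈ s, v i) - ∑ r ∈ t, a r := by
  classical
  set p : F[X] := ∏ r ∈ t, (X - C (a r)) with hp
  set q : F[X] := ∏ i ∈ s, (X - C (v i)) with hq
  have hpm : p.Monic := monic_prod_of_monic _ _ fun r _ => monic_X_sub_C _
  have hqm : q.Monic := monic_prod_of_monic _ _ fun i _ => monic_X_sub_C _
  have hpd : p.natDegree = #s := by
    rw [hp, natDegree_prod_of_monic _ _ fun r _ => monic_X_sub_C _]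
    simp [hcard]
  have hqd : q.natDegree = #s := by
    rw [hq, natDegree_prod_of_monic _ _ fun i _ => monic_X_sub_C _]
    simp
  have hdeg : (p - q).degree < (#s : ℕ) := by
    have h1 : p.degree = q.degree := by
      rw [degree_eq_natDegree hpm.ne_zero, degree_eq_natDegree hqm.ne_zero, hpd, hqd]
    have := degree_sub_lt h1 hpm.ne_zero (hpm.leadingCoeff.trans hqm.leadingCoeff.symm)
    calc (p - q).degree < p.degree := this
      _ = (#s : ℕ) := by rw [degree_eq_natDegree hpm.ne_zero, hpd]
  have hint := Lagrange.eq_interpolate hv hdeg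
  have hcoeff := congrArg (fun P => P.coeff (#s - 1)) hint
  simp only [Lagrange.interpolate_apply, finset_sum_coeff, coeff_C_mul, coeff_sub] at hcoeff
  have hscard : 0 < #s := card_pos.mpr hs
  have hpc : p.coeff (#s - 1) = -∑ r ∈ t, a r := by
    rw [hp, ← hcard, prod_X_sub_C_coeff_card_pred t a (hcard ▸ hscard)]
  have hqc : q.coeff (#s - 1) = -∑ i ∈ s, v i := by
    rw [hq, prod_X_sub_C_coeff_card_pred s v hscard]
  rw [hpc, hqc] at hcoeff
  have hbasis : ∀ i ∈ s, (Lagrange.basis s v i).coeff (#s - 1)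
      = (∏ j ∈ s.erase i, (v i - v j))⁻¹ := by
    intro i hi
    have h1 : (Lagrange.basis s v i).natDegree = #s - 1 := Lagrange.natDegree_basis hv hi
    rw [← h1, ← leadingCoeff, Lagrange.basis, leadingCoeff_prod, ← prod_inv_distrib]
    exact Finset.prod_congr rfl fun j _ => leadingCoeff_basisDivisor _ _
  have heval : ∀ i ∈ s, (p - q).eval (v i) = ∏ r ∈ t, (v i - a r) := by
    intro i hi
    have : q.eval (v i) = 0 := by
      rw [hq, eval_prod]
      exact Finset.prod_eq_zero hi (by simp)
    simp [this, hp, eval_prod]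
  calc ∑ i ∈ s, (∏ r ∈ t, (v i - a r)) * (∏ j ∈ s.erase i, (v i - v j))⁻¹
      = ∑ i ∈ s, (p - q).eval (v i) * (Lagrange.basis s v i).coeff (#s - 1) := by
        refine Finset.sum_congr rfl fun i hi => ?_
        rw [heval i hi, hbasis i hi]
    _ = -∑ r ∈ t, a r - -∑ i ∈ s, v i := hcoeff.symm
    _ = (∑ i ∈ s, v i) - ∑ r ∈ t, a r := by ring

-- shift lemmas
lemma shift_apply_same (n j : ℕ) (c : ℂ) (γ : Pt) : shift n j c γ (n, j) = γ (n, j) + c :=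
  if_pos rfl

lemma shift_apply_of_ne (n j : ℕ) (c : ℂ) (γ : Pt) {p : ℕ × ℕ} (h : p ≠ (n, j)) :
    shift n j c γ p = γ p := if_neg h

lemma shift_apply_ne_level (n j : ℕ) (c : ℂ) (γ : Pt) {m r : ℕ} (h : m ≠ n) :
    shift n j c γ (m, r) = γ (m, r) :=
  shift_apply_of_ne n j c γ (by simp [Prod.ext_iff, h])

lemma shift_comm (n j k : ℕ) (c d : ℂ) (γ : Pt) :
    shift n k d (shift n j c γ) = shift n j c (shift n k d γ) := by
  funext p
  simp only [shift]
  by_cases h1 : p = (n, j) <;> by_cases h2 : p = (n, k) <;>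
    simp [h1, h2] <;> first | (split_ifs <;> ring) | ring | rfl

lemma shift_cancel (n j : ℕ) (c : ℂ) (γ : Pt) : shift n j c (shift n j (-c) γ) = γ := by
  funext p
  simp only [shift]
  by_cases h1 : p = (n, j)
  · simp [h1]
  · simp [h1]

lemma disjSum_erase_inl {α β : Type*} [DecidableEq α] [DecidableEq β]
    (s : Finset α) (t : Finset β) (a : α) :
    (s.disjSum t).erase (Sum.inl a) = (s.erase a).disjSum t := by
  ext x
  cases x <;> simp [Finset.mem_erase, and_comm]

lemma disjSum_erase_inr {α β : Type*} [DecidableEq α] [DecidableEq β]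
    (s : Finset α) (t : Finset β) (b : β) :
    (s.disjSum t).erase (Sum.inr b) = s.disjSum (t.erase b) := by
  ext x
  cases x <;> simp [Finset.mem_erase, and_comm]

-- scalar helpers
lemma scalar1 {K : Type*} [Field K] {c : K} (hc : c ≠ 0) (A B D E : K) :
    -c * (A * B * (D * (-c * E))⁻¹) = A / D * (B / E) := by
  simp only [div_eq_mul_inv, mul_inv, inv_neg]
  linear_combination (A * B * D⁻¹ * E⁻¹) * mul_inv_cancel₀ hc

lemma scalar2 {K : Type*} [Field K] {c : K} (hc : c ≠ 0) (A B D E : K) :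
    c * (A * B * (c * D * E)⁻¹) = B / E * (A / D) := by
  simp only [div_eq_mul_inv, mul_inv]
  linear_combination (A * B * D⁻¹ * E⁻¹) * mul_inv_cancel₀ hc

lemma quot_swap {K : Type*} [Field K] (P R D1 D2 u v u' v' : K) (h : u * v = u' * v') :
    P / (u * D1) * (R / (v * D2)) = R / (u' * D2) * (P / (v' * D1)) := by
  rw [div_mul_div_comm, div_mul_div_comm]
  congr 1
  · exact mul_comm P R
  · linear_combination D1 * D2 * h

-- primed operators with abstract step c
def Araise' (c : ℂ) (n : ℕ) (γ : Pt) (j : ℕ) : ℂ :=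
  (∏ r ∈ Finset.Icc 1 (n + 1), (γ (n, j) - γ (n + 1, r) - c / 2)) /
    ∏ s ∈ (Finset.Icc 1 n).erase j, (γ (n, j) - γ (n, s))

def Alower' (c : ℂ) (n : ℕ) (γ : Pt) (j : ℕ) : ℂ :=
  (∏ r ∈ Finset.Icc 1 (n - 1), (γ (n, j) - γ (n - 1, r) + c / 2)) /
    ∏ s ∈ (Finset.Icc 1 n).erase j, (γ (n, j) - γ (n, s))

def Eraise' (c : ℂ) (n : ℕ) : Op := fun f γ =>
  -(1 / c) * ∑ j ∈ Finset.Icc 1 n, Araise' c n γ j * f (shift n j (-c) γ)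

def Elower' (c : ℂ) (n : ℕ) : Op := fun f γ =>
  (1 / c) * ∑ j ∈ Finset.Icc 1 n, Alower' c n γ j * f (shift n j c γ)

def Ediag' (c : ℂ) (n : ℕ) : Op := fun f γ =>
  (1 / c) * ((∑ j ∈ Finset.Icc 1 n, γ (n, j)) - ∑ j ∈ Finset.Icc 1 (n - 1), γ (n - 1, j)) * f γ

lemma main_aux (n : ℕ) (hn1 : 1 ≤ n) (c : ℂ) (hc0 : c ≠ 0) (f : Pt → ℂ) (γ : Pt)
    (hgen : ∀ j ∈ Finset.Icc 1 n, ∀ s ∈ Finset.Icc 1 n, j ≠ s →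
      ∀ k : ℤ, γ (n, j) - γ (n, s) ≠ c * k) :
    Eraise' c n (Elower' c n f) γ - Elower' c n (Eraise' c n f) γ =
      Ediag' c n f γ - Ediag' c (n + 1) f γ := by
  classical
  -- genericity consequences
  have hne0 : ∀ j ∈ Finset.Icc 1 n, ∀ s ∈ Finset.Icc 1 n, j ≠ s → γ (n, j) ≠ γ (n, s) := by
    intro j hj s hs hjs h
    exact hgen j hj s hs hjs 0 (by rw [h]; simp)
  -- the injectivity for key_residue
  have hv : Set.InjOn (Sum.elim (fun j => γ (n, j)) (fun j => γ (n, j) + c))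
      ((Finset.Icc 1 n).disjSum (Finset.Icc 1 n)) := by
    rintro (j | j) hj (s | s) hs hval <;>
      simp only [Sum.elim_inl, Sum.elim_inr, Finset.coe_sort_coe, Finset.mem_coe,
        Finset.inl_mem_disjSum, Finset.inr_mem_disjSum] at hj hs hval ⊢
    · by_contra hne
      have hjs : j ≠ s := by simpa using hne
      exact hgen j hj s hs hjs 0 (by rw [hval]; simp)
    · exfalso
      by_cases hjs : j = s
      · subst hjs
        exact hc0 (by linear_combination -hval)
      · exact hgen j hj s hs hjs 1 (by rw [Int.cast_one, mul_one]; linear_combination hval)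
    · exfalso
      by_cases hjs : j = s
      · subst hjs
        exact hc0 (by linear_combination hval)
      · exact hgen j hj s hs hjs (-1) (by push_cast; linear_combination hval)
    · by_contra hne
      have hjs : j ≠ s := by simpa using hne
      have : γ (n, j) = γ (n, s) := by linear_combination hval
      exact hgen j hj s hs hjs 0 (by rw [this]; simp)
  have hcard2 : #((Finset.Icc 1 (n + 1)).disjSum (Finset.Icc 1 (n - 1)))
      = #((Finset.Icc 1 n).disjSum (Finset.Icc 1 n)) := by
    simp only [Finset.card_disjSum, Nat.card_Icc]
    omega
  have hkey := key_residue ((Finset.Icc 1 n).disjSum (Finset.Icc 1 n))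
      ((Finset.Icc 1 (n + 1)).disjSum (Finset.Icc 1 (n - 1)))
      ⟨Sum.inl 1, by simp [hn1]⟩ hcard2
      (Sum.elim (fun j => γ (n, j)) (fun j => γ (n, j) + c))
      (Sum.elim (fun r => γ (n + 1, r) + c / 2) (fun r => γ (n - 1, r) + c / 2)) hv
  simp only [Finset.sum_disjSum, Finset.prod_disjSum, disjSum_erase_inl, disjSum_erase_inr,
    Sum.elim_inl, Sum.elim_inr] at hkey
  -- per-term identifications
  have hTinl : ∀ j ∈ Finset.Icc 1 n,
      -c * ((∏ r ∈ Finset.Icc 1 (n + 1), (γ (n, j) - (γ (n + 1, r) + c / 2))) *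
          (∏ r ∈ Finset.Icc 1 (n - 1), (γ (n, j) - (γ (n - 1, r) + c / 2))) *
        ((∏ s ∈ (Finset.Icc 1 n).erase j, (γ (n, j) - γ (n, s))) *
          ∏ s ∈ Finset.Icc 1 n, (γ (n, j) - (γ (n, s) + c)))⁻¹)
      = Araise' c n γ j * Alower' c n (shift n j (-c) γ) j := by
    intro j hj
    have eB : Araise' c n γ j =
        (∏ r ∈ Finset.Icc 1 (n + 1), (γ (n, j) - (γ (n + 1, r) + c / 2))) /
          ∏ s ∈ (Finset.Icc 1 n).erase j, (γ (n, j) - γ (n, s)) := by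
      unfold Araise'
      congr 1
      exact Finset.prod_congr rfl fun r _ => by ring
    have eA : Alower' c n (shift n j (-c) γ) j =
        (∏ r ∈ Finset.Icc 1 (n - 1), (γ (n, j) - (γ (n - 1, r) + c / 2))) /
          ∏ s ∈ (Finset.Icc 1 n).erase j, (γ (n, j) - (γ (n, s) + c)) := by
      unfold Alower'
      simp only [shift_apply_same]
      congr 1
      · refine Finset.prod_congr rfl fun r _ => ?_
        rw [shift_apply_ne_level n j (-c) γ (show n - 1 ≠ n by omega)]
        ring
      · refine Finset.prod_congr rfl fun s hs => ?_
        rw [shift_apply_of_ne n j (-c) γ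
          (by simp [Prod.ext_iff, (Finset.mem_erase.mp hs).1])]
        ring
    rw [eA, eB]
    rw [← Finset.mul_prod_erase _ _ hj,
      show γ (n, j) - (γ (n, j) + c) = -c by ring]
    exact scalar1 hc0 _ _ _ _
  have hTinr : ∀ j ∈ Finset.Icc 1 n,
      c * ((∏ r ∈ Finset.Icc 1 (n + 1), (γ (n, j) + c - (γ (n + 1, r) + c / 2))) *
          (∏ r ∈ Finset.Icc 1 (n - 1), (γ (n, j) + c - (γ (n - 1, r) + c / 2))) *
        ((∏ s ∈ Finset.Icc 1 n, (γ (n, j) + c - γ (n, s))) *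
          ∏ s ∈ (Finset.Icc 1 n).erase j, (γ (n, j) + c - (γ (n, s) + c)))⁻¹)
      = Alower' c n γ j * Araise' c n (shift n j c γ) j := by
    intro j hj
    have eD : Alower' c n γ j =
        (∏ r ∈ Finset.Icc 1 (n - 1), (γ (n, j) + c - (γ (n - 1, r) + c / 2))) /
          ∏ s ∈ (Finset.Icc 1 n).erase j, (γ (n, j) + c - (γ (n, s) + c)) := by
      unfold Alower'
      congr 1
      · exact Finset.prod_congr rfl fun r _ => by ring
      · exact Finset.prod_congr rfl fun s _ => by ring
    have eC : Araise' c n (shift n j c γ) j =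
        (∏ r ∈ Finset.Icc 1 (n + 1), (γ (n, j) + c - (γ (n + 1, r) + c / 2))) /
          ∏ s ∈ (Finset.Icc 1 n).erase j, (γ (n, j) + c - γ (n, s)) := by
      unfold Araise'
      simp only [shift_apply_same]
      congr 1
      · refine Finset.prod_congr rfl fun r _ => ?_
        rw [shift_apply_ne_level n j c γ (show n + 1 ≠ n by omega)]
        ring
      · refine Finset.prod_congr rfl fun s hs => ?_
        rw [shift_apply_of_ne n j c γ
          (by simp [Prod.ext_iff, (Finset.mem_erase.mp hs).1])]
    rw [eC, eD]
    rw [← Finset.mul_prod_erase _ _ hj,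
      show γ (n, j) + c - γ (n, j) = c by ring]
    exact scalar2 hc0 _ _ _ _
  -- the diagonal sum identity
  have hM : ((∑ j ∈ Finset.Icc 1 n, γ (n, j)) + ∑ j ∈ Finset.Icc 1 n, (γ (n, j) + c)) -
        ((∑ r ∈ Finset.Icc 1 (n + 1), (γ (n + 1, r) + c / 2)) +
          ∑ r ∈ Finset.Icc 1 (n - 1), (γ (n - 1, r) + c / 2))
      = 2 * (∑ j ∈ Finset.Icc 1 n, γ (n, j)) - (∑ r ∈ Finset.Icc 1 (n + 1), γ (n + 1, r)) -
          ∑ r ∈ Finset.Icc 1 (n - 1), γ (n - 1, r) := by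
    rw [Finset.sum_add_distrib, Finset.sum_add_distrib, Finset.sum_add_distrib,
      Finset.sum_const, Finset.sum_const, Finset.sum_const, Nat.card_Icc, Nat.card_Icc,
      Nat.card_Icc]
    simp only [nsmul_eq_mul]
    rw [show n + 1 - 1 = n from by omega, show n + 1 + 1 - 1 = n + 1 from by omega,
      show n - 1 + 1 - 1 = n - 1 from by omega, Nat.cast_sub hn1]
    push_cast
    ring
  have hdiagsum : ∑ j ∈ Finset.Icc 1 n,
      (Araise' c n γ j * Alower' c n (shift n j (-c) γ) j -
        Alower' c n γ j * Araise' c n (shift n j c γ) j)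
      = -c * (2 * (∑ j ∈ Finset.Icc 1 n, γ (n, j)) -
          (∑ r ∈ Finset.Icc 1 (n + 1), γ (n + 1, r)) -
          ∑ r ∈ Finset.Icc 1 (n - 1), γ (n - 1, r)) := by
    rw [Finset.sum_sub_distrib]
    rw [← Finset.sum_congr rfl hTinl, ← Finset.sum_congr rfl hTinr]
    rw [← Finset.mul_sum, ← Finset.mul_sum]
    linear_combination (-c) * hkey + (-c) * hM
  -- expansion of the two compositions
  have expand1 : Eraise' c n (Elower' c n f) γ =
      ∑ j ∈ Finset.Icc 1 n, ∑ k ∈ Finset.Icc 1 n,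
        (-(1 / c) * (1 / c)) * (Araise' c n γ j * Alower' c n (shift n j (-c) γ) k) *
          f (shift n k c (shift n j (-c) γ)) := by
    simp only [Eraise', Elower', Finset.mul_sum]
    exact Finset.sum_congr rfl fun j _ => Finset.sum_congr rfl fun k _ => by ring
  have expand2 : Elower' c n (Eraise' c n f) γ =
      ∑ j ∈ Finset.Icc 1 n, ∑ k ∈ Finset.Icc 1 n,
        (-(1 / c) * (1 / c)) * (Alower' c n γ k * Araise' c n (shift n k c γ) j) *
          f (shift n k c (shift n j (-c) γ)) := by
    rw [Finset.sum_comm]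
    simp only [Elower', Eraise', Finset.mul_sum]
    refine Finset.sum_congr rfl fun k _ => Finset.sum_congr rfl fun j _ => ?_
    rw [shift_comm n k j c (-c)]
    ring
  -- off-diagonal cancellation
  have hoff : ∀ j ∈ Finset.Icc 1 n, ∀ k ∈ Finset.Icc 1 n, j ≠ k →
      Araise' c n γ j * Alower' c n (shift n j (-c) γ) k
        = Alower' c n γ k * Araise' c n (shift n k c γ) j := by
    intro j hj k hk hjk
    have hkj : k ≠ j := hjk.symm
    have hjmem : j ∈ (Finset.Icc 1 n).erase k := Finset.mem_erase.mpr ⟨hjk, hj⟩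
    have hkmem : k ∈ (Finset.Icc 1 n).erase j := Finset.mem_erase.mpr ⟨hkj, hk⟩
    have e1 : Araise' c n γ j =
        (∏ r ∈ Finset.Icc 1 (n + 1), (γ (n, j) - γ (n + 1, r) - c / 2)) /
          ((γ (n, j) - γ (n, k)) *
            ∏ s ∈ ((Finset.Icc 1 n).erase j).erase k, (γ (n, j) - γ (n, s))) := by
      unfold Araise'
      rw [← Finset.mul_prod_erase _ _ hkmem]
    have e2 : Alower' c n γ k =
        (∏ r ∈ Finset.Icc 1 (n - 1), (γ (n, k) - γ (n - 1, r) + c / 2)) /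
          ((γ (n, k) - γ (n, j)) *
            ∏ s ∈ ((Finset.Icc 1 n).erase k).erase j, (γ (n, k) - γ (n, s))) := by
      unfold Alower'
      rw [← Finset.mul_prod_erase _ _ hjmem]
    have e3 : Alower' c n (shift n j (-c) γ) k =
        (∏ r ∈ Finset.Icc 1 (n - 1), (γ (n, k) - γ (n - 1, r) + c / 2)) /
          ((γ (n, k) - (γ (n, j) - c)) *
            ∏ s ∈ ((Finset.Icc 1 n).erase k).erase j, (γ (n, k) - γ (n, s))) := by
      unfold Alower'
      have hnkj : ((n : ℕ), k) ≠ ((n : ℕ), j) := by simp [Prod.ext_iff, hkj]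
      rw [shift_apply_of_ne n j (-c) γ hnkj]
      congr 1
      · refine Finset.prod_congr rfl fun r _ => ?_
        rw [shift_apply_ne_level n j (-c) γ (show n - 1 ≠ n by omega)]
      · rw [← Finset.mul_prod_erase _ _ hjmem, shift_apply_same]
        congr 1
        refine Finset.prod_congr rfl fun s hs => ?_
        rw [shift_apply_of_ne n j (-c) γ
          (by simp [Prod.ext_iff, (Finset.mem_erase.mp hs).1])]
    have e4 : Araise' c n (shift n k c γ) j =
        (∏ r ∈ Finset.Icc 1 (n + 1), (γ (n, j) - γ (n + 1, r) - c / 2)) /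
          ((γ (n, j) - (γ (n, k) + c)) *
            ∏ s ∈ ((Finset.Icc 1 n).erase j).erase k, (γ (n, j) - γ (n, s))) := by
      unfold Araise'
      have hnjk : ((n : ℕ), j) ≠ ((n : ℕ), k) := by simp [Prod.ext_iff, hjk]
      rw [shift_apply_of_ne n k c γ hnjk]
      congr 1
      · refine Finset.prod_congr rfl fun r _ => ?_
        rw [shift_apply_ne_level n k c γ (show n + 1 ≠ n by omega)]
      · rw [← Finset.mul_prod_erase _ _ hkmem, shift_apply_same]
        congr 1
        refine Finset.prod_congr rfl fun s hs => ?_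
        rw [shift_apply_of_ne n k c γ
          (by simp [Prod.ext_iff, (Finset.mem_erase.mp hs).1])]
    rw [e1, e2, e3, e4]
    exact quot_swap _ _ _ _ _ _ _ _ (by ring)
  -- assemble
  rw [expand1, expand2, ← Finset.sum_sub_distrib]
  have hcollapse : ∀ j ∈ Finset.Icc 1 n,
      (∑ k ∈ Finset.Icc 1 n,
        ((-(1 / c) * (1 / c)) * (Araise' c n γ j * Alower' c n (shift n j (-c) γ) k) *
            f (shift n k c (shift n j (-c) γ)))) -
        (∑ k ∈ Finset.Icc 1 n,
          ((-(1 / c) * (1 / c)) * (Alower' c n γ k * Araise' c n (shift n k c γ) j) *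
            f (shift n k c (shift n j (-c) γ))))
      = ((-(1 / c) * (1 / c)) *
          (Araise' c n γ j * Alower' c n (shift n j (-c) γ) j -
            Alower' c n γ j * Araise' c n (shift n j c γ) j)) * f γ := by
    intro j hj
    rw [← Finset.sum_sub_distrib]
    rw [Finset.sum_eq_single_of_mem j hj (fun k hk hkj => by
      rw [hoff j hj k hk hkj.symm]; ring)]
    rw [shift_cancel]
    ring
  rw [Finset.sum_congr rfl hcollapse]
  rw [← Finset.sum_mul, ← Finset.mul_sum, hdiagsum]
  simp only [Ediag', Nat.add_sub_cancel]
  field_simp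
  ring


theorem gz_commutator_diag (N : ℕ) (hN : 2 ≤ N) (hb : ℂ) (hhb : hb ≠ 0)
    (n : ℕ) (hn1 : 1 ≤ n) (hn2 : n ≤ N - 1)
    (f : Pt → ℂ) (γ : Pt) (hγ : Generic N hb γ) :
    Eraise hb n (Elower hb n f) γ - Elower hb n (Eraise hb n f) γ =
      Ediag hb n f γ - Ediag hb (n + 1) f γ := by
  have hgen : ∀ j ∈ Finset.Icc 1 n, ∀ s ∈ Finset.Icc 1 n, j ≠ s →
      ∀ k : ℤ, γ (n, j) - γ (n, s) ≠ Complex.I * hb * k := fun j hj s hs hjs k =>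
    hγ n j s hn1 (le_trans hn2 (Nat.sub_le N 1)) (Finset.mem_Icc.mp hj).1
      (Finset.mem_Icc.mp hj).2 (Finset.mem_Icc.mp hs).1 (Finset.mem_Icc.mp hs).2 hjs k
  exact main_aux n hn1 (Complex.I * hb) (mul_ne_zero Complex.I_ne_zero hhb) f γ hgen
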